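/- Let (a_n)_{n≥0} be a sequence of positive reals and suppose there exist constants γ > 0, n₀ ∈ ℕ, A > 0, and a sequence (δ_n)_{n≥n₀} of reals with δ_n → 0 such that a_{n+1} = exp(-(1+δ_n)·A·a_n^γ)·a_n for all n ≥ n₀. Then a_n · (γ A n)^{1/γ} → 1 as n → ∞. -/

import Mathlib

open Filter Real Finset Topology

theorem stmt3 (a : ℕ → ℝ) (ha : ∀ n, 0 < a n) (γ A : ℝ) (hγ : 0 < γ) (hA : 0 < A)
    (n₀ : ℕ) (δ : ℕ → ℝ) (hδ : Filter.Tendsto δ Filter.atTop (nhds 0))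
    (hrec : ∀ n ≥ n₀, a (n + 1) = Real.exp (-((1 + δ n) * A * a n ^ γ)) * a n) :
    Filter.Tendsto (fun n : ℕ => a n * (γ * A * n) ^ (1 / γ)) Filter.atTop (nhds 1) := by
  -- choose N beyond which |δ n| < 1/2
  obtain ⟨N₁, hN₁⟩ : ∃ N, ∀ n ≥ N, |δ n| < 1/2 := by
    have := (Metric.tendsto_atTop.mp hδ (1/2) (by norm_num))
    simpa [Real.dist_eq] using this
  set N := max N₁ n₀ with hN
  have hδpos : ∀ n ≥ N, (1:ℝ)/2 ≤ 1 + δ n := by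
    intro n hn
    have := hN₁ n (le_trans (le_max_left _ _) hn)
    have := abs_lt.mp this
    linarith [this.1]
  have hrec' : ∀ n ≥ N, a (n + 1) = Real.exp (-((1 + δ n) * A * a n ^ γ)) * a n :=
    fun n hn => hrec n (le_trans (le_max_right _ _) hn)
  -- a is eventually antitone
  have hanti : Antitone (fun k => a (k + N)) := by
    apply antitone_nat_of_succ_le
    intro k
    have hk : k + N ≥ N := Nat.le_add_left _ _
    rw [show k + 1 + N = (k + N) + 1 by ring, hrec' (k + N) hk]
    have hexp : Real.exp (-((1 + δ (k+N)) * A * a (k+N) ^ γ)) ≤ 1 := by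
      rw [Real.exp_le_one_iff]
      have h1 : (0:ℝ) < 1 + δ (k+N) := lt_of_lt_of_le (by norm_num) (hδpos _ hk)
      have h2 : (0:ℝ) < a (k+N) ^ γ := Real.rpow_pos_of_pos (ha _) _
      have := mul_pos (mul_pos h1 hA) h2
      linarith
    calc Real.exp (-((1 + δ (k+N)) * A * a (k+N) ^ γ)) * a (k+N)
        ≤ 1 * a (k+N) := by
          apply mul_le_mul_of_nonneg_right hexp (ha _).le
      _ = a (k+N) := one_mul _
  -- a tends to its infimum L
  set L := ⨅ k, a (k + N) with hLdef
  have hL : Tendsto a atTop (𝓝 L) := by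
    have : Tendsto (fun k => a (k + N)) atTop (𝓝 L) :=
      tendsto_atTop_ciInf hanti ⟨0, fun x ⟨k, hk⟩ => hk ▸ (ha _).le⟩
    exact (tendsto_add_atTop_iff_nat N).mp this
  have hL0 : (0:ℝ) ≤ L := le_ciInf fun k => (ha _).le
  -- L = 0
  have hLzero : L = 0 := by
    by_contra hne
    have hLpos : 0 < L := lt_of_le_of_ne hL0 (Ne.symm hne)
    have h1 : Tendsto (fun n => a (n + 1)) atTop (𝓝 L) :=
      (tendsto_add_atTop_iff_nat 1).mpr hL
    have hag : Tendsto (fun n => a n ^ γ) atTop (𝓝 (L ^ γ)) :=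
      ((Real.continuousAt_rpow_const L γ (Or.inr hγ.le)).tendsto).comp hL
    have h2 : Tendsto (fun n => Real.exp (-((1 + δ n) * A * a n ^ γ)) * a n) atTop
        (𝓝 (Real.exp (-((1 + 0) * A * L ^ γ)) * L)) := by
      exact (Real.continuous_exp.continuousAt.tendsto.comp
        ((((tendsto_const_nhds.add hδ).mul tendsto_const_nhds).mul hag).neg)).mul hL
    have h3 : Tendsto (fun n => a (n + 1)) atTop (𝓝 (Real.exp (-((1 + 0) * A * L ^ γ)) * L)) := by
      exact Tendsto.congr' (eventually_atTop.mpr ⟨N, fun n hn => (hrec' n hn).symm⟩) h2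
    have heq := tendsto_nhds_unique h1 h3
    have hLg : 0 < L ^ γ := Real.rpow_pos_of_pos hLpos _
    have hexplt : Real.exp (-((1 + 0) * A * L ^ γ)) < 1 := by
      rw [Real.exp_lt_one_iff]
      nlinarith
    nlinarith [heq, hLpos]
  rw [hLzero] at hL
  -- now a → 0
  have hag0 : Tendsto (fun n => a n ^ γ) atTop (𝓝 0) := by
    have := ((Real.continuousAt_rpow_const 0 γ (Or.inr hγ.le)).tendsto).comp hL
    simpa [Real.zero_rpow hγ.ne', Function.comp_def] using this
  -- define b
  set b : ℕ → ℝ := fun n => a n ^ (-γ) with hbdef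
  have hb : ∀ n, 0 < b n := fun n => Real.rpow_pos_of_pos (ha n) _
  set x : ℕ → ℝ := fun n => γ * ((1 + δ n) * A * a n ^ γ) with hxdef
  have hx0 : Tendsto x atTop (𝓝 0) := by
    have : Tendsto x atTop (𝓝 (γ * ((1 + 0) * A * 0))) :=
      tendsto_const_nhds.mul (((tendsto_const_nhds.add hδ).mul tendsto_const_nhds).mul hag0)
    simpa using this
  have hxpos : ∀ n ≥ N, 0 < x n := by
    intro n hn
    have h1 : (0:ℝ) < 1 + δ n := lt_of_lt_of_le (by norm_num) (hδpos _ hn)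
    have h2 : (0:ℝ) < a n ^ γ := Real.rpow_pos_of_pos (ha _) _
    have := hγ
    positivity
  have hbx : ∀ n, b n * x n = γ * ((1 + δ n) * A) := by
    intro n
    have : b n * a n ^ γ = 1 := by
      rw [hbdef]
      rw [← Real.rpow_add (ha n)]
      simp
    calc b n * (γ * ((1 + δ n) * A * a n ^ γ))
        = γ * ((1 + δ n) * A) * (b n * a n ^ γ) := by ring
      _ = γ * ((1 + δ n) * A) := by rw [this, mul_one]
  have hbrec : ∀ n ≥ N, b (n + 1) = Real.exp (x n) * b n := by
    intro n hn
    rw [hbdef]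
    simp only
    rw [hrec' n hn, Real.mul_rpow (Real.exp_pos _).le (ha n).le,
      Real.rpow_def_of_pos (Real.exp_pos _), Real.log_exp]
    simp only [hxdef]
    ring_nf
  -- slope / derivative fact
  have hslope : Tendsto (fun n => (Real.exp (x n) - 1) / x n) atTop (𝓝 1) := by
    have hd := Real.hasDerivAt_exp 0
    rw [hasDerivAt_iff_tendsto_slope] at hd
    have hxin : Tendsto x atTop (𝓝[≠] (0:ℝ)) := by
      apply tendsto_nhdsWithin_of_tendsto_nhds_of_eventually_within _ hx0
      exact eventually_atTop.mpr ⟨N, fun n hn => (hxpos n hn).ne'⟩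
    have := hd.comp hxin
    simp only [Real.exp_zero] at this
    refine this.congr fun n => ?_
    simp [slope_def_field, div_eq_div_iff]
    try ring
  have hdiff : Tendsto (fun n => b (n + 1) - b n) atTop (𝓝 (γ * A)) := by
    have hlim : Tendsto (fun n => (Real.exp (x n) - 1) / x n * (γ * ((1 + δ n) * A))) atTop
        (𝓝 (1 * (γ * ((1 + 0) * A)))) :=
      hslope.mul (tendsto_const_nhds.mul ((tendsto_const_nhds.add hδ).mul tendsto_const_nhds))
    have : Tendsto (fun n => (Real.exp (x n) - 1) / x n * (γ * ((1 + δ n) * A))) atTop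
        (𝓝 (γ * A)) := by simpa using hlim
    refine Tendsto.congr' ?_ this
    filter_upwards [eventually_atTop.mpr ⟨N, fun n hn => hn⟩] with n hn
    rw [← hbx n, hbrec n hn]
    have hxne := (hxpos n hn).ne'
    field_simp
  -- Cesàro
  have hcesaro : Tendsto (fun n : ℕ => (b n - b 0) / n) atTop (𝓝 (γ * A)) := by
    have := hdiff.cesaro
    refine this.congr fun n => ?_
    rw [Finset.sum_range_sub]
    ring
  have hbn : Tendsto (fun n : ℕ => b n / n) atTop (𝓝 (γ * A)) := by
    have h2 : Tendsto (fun n : ℕ => b 0 / n) atTop (𝓝 0) :=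
      tendsto_const_div_atTop_nhds_zero_nat _
    have := hcesaro.add h2
    simp only [add_zero] at this
    refine this.congr fun n => ?_
    ring
  have hγA : (0:ℝ) < γ * A := mul_pos hγ hA
  have hratio : Tendsto (fun n : ℕ => γ * A * n / b n) atTop (𝓝 1) := by
    have : Tendsto (fun n : ℕ => (γ * A) / (b n / n)) atTop (𝓝 ((γ * A) / (γ * A))) :=
      tendsto_const_nhds.div hbn hγA.ne'
    rw [div_self hγA.ne'] at this
    refine Tendsto.congr' ?_ this
    filter_upwards [eventually_atTop.mpr ⟨1, fun (n:ℕ) hn => hn⟩] with n hn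
    have hn0 : (n:ℝ) ≠ 0 := Nat.cast_ne_zero.mpr (Nat.one_le_iff_ne_zero.mp hn)
    rw [div_div_eq_mul_div]
  -- conclude
  have hfinal : Tendsto (fun n : ℕ => (γ * A * n / b n) ^ (1/γ)) atTop (𝓝 1) := by
    have hc : ContinuousAt (fun y : ℝ => y ^ (1/γ)) 1 :=
      Real.continuousAt_rpow_const 1 (1/γ) (Or.inl one_ne_zero)
    have := hc.tendsto.comp hratio
    simpa [Function.comp_def] using this
  refine Tendsto.congr' ?_ hfinal
  filter_upwards [eventually_atTop.mpr ⟨1, fun (n:ℕ) hn => hn⟩] with n hn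
  have hn0 : (0:ℝ) < (n:ℝ) := by exact_mod_cast Nat.lt_of_lt_of_le Nat.zero_lt_one hn
  have hnum : (0:ℝ) < γ * A * n := mul_pos hγA hn0
  rw [Real.div_rpow hnum.le (hb n).le]
  have hbinv : (b n) ^ (1/γ) = (a n)⁻¹ := by
    rw [hbdef]
    simp only
    rw [← Real.rpow_mul (ha n).le]
    have : -γ * (1/γ) = -1 := by field_simp
    rw [this, Real.rpow_neg_one]
  rw [hbinv, div_inv_eq_mul, mul_comm]
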